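/- Let p be an odd prime, and m, n positive integers with p not dividing m. Define K_p(r,m) = ∑_{0<k<p, m | k−rp} 1/k (a sum in ℤ/pℤ). Then B_{p-1}({pn/m}) − B_{p-1} ≡ m·∑_{r=1}^{n} K_p(r,m) ≡ −∑_{0<k≤⌊pn/m⌋, p∤k} 1/k (mod p). -/

import Mathlib

/-- `K_p(r, m) = ∑_{0<k<p, m ∣ k - r p} 1/k` computed in `ℤ/pℤ`. -/
def Kp (p m : ℕ) (r : ℤ) : ZMod p :=
  ∑ k ∈ (Finset.Ioo 0 p).filter (fun k : ℕ => (m : ℤ) ∣ (k : ℤ) - r * p),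
    ((k : ZMod p))⁻¹

open Finset

namespace Aux

variable {p : ℕ} [Fact p.Prime]

/-- p-integrality of a rational. -/
def PI (p : ℕ) (q : ℚ) : Prop := ¬ p ∣ q.den

lemma PI.denNe {q : ℚ} (h : PI p q) : ((q.den : ZMod p)) ≠ 0 := by
  exact (ZMod.natCast_eq_zero_iff _ _).not.mpr h

lemma PI.add {a b : ℚ} (ha : PI p a) (hb : PI p b) : PI p (a + b) := by
  intro h
  rcases (Fact.out : p.Prime).dvd_mul.mp (h.trans (Rat.add_den_dvd a b)) with h' | h'
  exacts [ha h', hb h']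

lemma PI.mul {a b : ℚ} (ha : PI p a) (hb : PI p b) : PI p (a * b) := by
  intro h
  rcases (Fact.out : p.Prime).dvd_mul.mp (h.trans (Rat.mul_den_dvd a b)) with h' | h'
  exacts [ha h', hb h']

lemma PI.natCast (n : ℕ) : PI p (n : ℚ) := by
  simp [PI, (Fact.out : p.Prime).one_lt.ne']

lemma PI.intCast (n : ℤ) : PI p (n : ℚ) := by
  simp [PI, (Fact.out : p.Prime).one_lt.ne']

omit [Fact p.Prime] in
lemma PI.neg {a : ℚ} (ha : PI p a) : PI p (-a) := by
  simpa [PI] using ha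

lemma PI.pow {a : ℚ} (ha : PI p a) (k : ℕ) : PI p (a ^ k) := by
  induction k with
  | zero => simpa using PI.natCast 1
  | succ k ih => rw [pow_succ]; exact ih.mul ha

lemma PI.sum {ι : Type*} {s : Finset ι} {f : ι → ℚ} (h : ∀ i ∈ s, PI p (f i)) :
    PI p (∑ i ∈ s, f i) := by
  classical
  induction s using Finset.induction_on with
  | empty => simpa using PI.natCast 0
  | insert _ _ hne ih =>
    rw [Finset.sum_insert hne]
    exact (h _ (Finset.mem_insert_self _ _)).add
      (ih fun i hi => h i (Finset.mem_insert_of_mem hi))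

lemma PI.divNat {q : ℚ} {d : ℕ} (hq : PI p q) (hd : ¬ p ∣ d) : PI p (q / d) := by
  have h1 : PI p ((d : ℚ))⁻¹ := by
    intro h
    have hdvd : ((Rat.divInt 1 (d : ℤ)).den : ℤ) ∣ (d : ℤ) := Rat.den_dvd 1 (d : ℤ)
    have he : (Rat.divInt 1 (d : ℤ)) = ((d : ℚ))⁻¹ := by
      rw [Rat.divInt_eq_div]; push_cast; rw [one_div]
    rw [he] at hdvd
    exact hd (Int.ofNat_dvd.mp ((Int.natCast_dvd_natCast.mpr h).trans hdvd))
  rw [div_eq_mul_inv]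
  exact hq.mul h1

lemma cast_add' {a b : ℚ} (ha : PI p a) (hb : PI p b) :
    ((a + b : ℚ) : ZMod p) = (a : ZMod p) + b :=
  Rat.cast_add_of_ne_zero ha.denNe hb.denNe

lemma cast_mul' {a b : ℚ} (ha : PI p a) (hb : PI p b) :
    ((a * b : ℚ) : ZMod p) = (a : ZMod p) * b :=
  Rat.cast_mul_of_ne_zero ha.denNe hb.denNe

lemma cast_pow' {a : ℚ} (ha : PI p a) (k : ℕ) :
    ((a ^ k : ℚ) : ZMod p) = (a : ZMod p) ^ k := by
  induction k with
  | zero => simp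
  | succ k ih => rw [pow_succ, pow_succ, cast_mul' (ha.pow k) ha, ih]

lemma cast_sum' {ι : Type*} {s : Finset ι} {f : ι → ℚ} (h : ∀ i ∈ s, PI p (f i)) :
    ((∑ i ∈ s, f i : ℚ) : ZMod p) = ∑ i ∈ s, ((f i : ZMod p)) := by
  classical
  induction s using Finset.induction_on with
  | empty => simp
  | insert a s hne ih =>
    rw [Finset.sum_insert hne, Finset.sum_insert hne,
      cast_add' (h _ (Finset.mem_insert_self _ _))
        (PI.sum fun i hi => h i (Finset.mem_insert_of_mem hi)),
      ih fun i hi => h i (Finset.mem_insert_of_mem hi)]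

lemma bern_PI : ∀ i, i < p - 1 → PI p (bernoulli i) := by
  intro i
  induction i using Nat.strong_induction_on with
  | _ i ih =>
    intro hi
    rcases Nat.eq_zero_or_pos i with rfl | hi0
    · simpa [bernoulli_zero] using PI.natCast 1
    · have h := sum_bernoulli (i + 1)
      rw [if_neg (by omega), Finset.sum_range_succ, Nat.choose_succ_self_right] at h
      have hB : bernoulli i =
          (-(∑ k ∈ Finset.range i, ((i + 1).choose k : ℚ) * bernoulli k)) / (i + 1 : ℕ) := by
        have hne : ((i + 1 : ℕ) : ℚ) ≠ 0 := by positivity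
        rw [eq_div_iff hne]
        push_cast at h ⊢
        linarith [h]
      rw [hB]
      refine PI.divNat (PI.neg (PI.sum fun k hk => ?_)) ?_
      · have hk' := Finset.mem_range.mp hk
        exact (PI.natCast _).mul (ih k hk' (by omega))
      · intro hd
        have h1 := Nat.le_of_dvd (by omega) hd
        have h2 := (Fact.out : p.Prime).two_le
        omega

end Aux

lemma eval_sub_eq (n : ℕ) (x : ℚ) :
    (Polynomial.bernoulli n).eval x - bernoulli n =
      ∑ i ∈ Finset.range n, (bernoulli i * (n.choose i) : ℚ) * x ^ (n - i) := by
  rw [Polynomial.bernoulli, Polynomial.eval_finset_sum, Finset.sum_range_succ]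
  simp only [Polynomial.eval_monomial]
  rw [Nat.sub_self, Nat.choose_self, pow_zero, Nat.cast_one, mul_one, mul_one,
    add_sub_cancel_right]

lemma eval_neg_nat (n : ℕ) (N : ℕ) :
    (Polynomial.bernoulli n).eval (-(N : ℚ)) =
      (Polynomial.bernoulli n).eval 0 - n * ∑ j ∈ Finset.Icc 1 N, (-(j : ℚ)) ^ (n - 1) := by
  induction N with
  | zero => simp
  | succ N ih =>
    have h := Polynomial.bernoulli_eval_one_add n (-((N : ℚ) + 1))
    have he : (1 + -((N : ℚ) + 1)) = -(N : ℚ) := by ring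
    rw [he] at h
    rw [Finset.sum_Icc_succ_top (by omega : 1 ≤ N + 1)]
    push_cast at h ⊢
    linarith [ih, h]

lemma fwd_facts (p m : ℕ) (r k : ℕ) (hp0 : 0 < p) (hm : 0 < m) (hr1 : 1 ≤ r)
    (hk1 : 0 < k) (hk2 : k < p) (hdZ : (m : ℤ) ∣ (k : ℤ) - (r : ℤ) * p) :
    k ≤ r * p ∧ m ∣ r * p - k ∧ (r * p - k) / m * m = r * p - k ∧ ¬ p ∣ (r * p - k) / m := by
  have hprp : p ≤ r * p := Nat.le_mul_of_pos_left p hr1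
  have hkle : k ≤ r * p := by omega
  have hdvdN : m ∣ r * p - k := by
    have h1 : (m : ℤ) ∣ ((r : ℤ) * p - k) := by
      have := hdZ.neg_right; rwa [neg_sub] at this
    have h2 : ((r * p - k : ℕ) : ℤ) = (r : ℤ) * p - k := by
      push_cast [Nat.cast_sub hkle]; ring
    exact_mod_cast h2 ▸ h1
  have hjm : (r * p - k) / m * m = r * p - k := Nat.div_mul_cancel hdvdN
  refine ⟨hkle, hdvdN, hjm, ?_⟩
  intro hd
  have h1 : p ∣ (r * p - k) / m * m := hd.mul_right m
  rw [hjm] at h1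
  have h2 : p ∣ r * p := dvd_mul_left p r
  have h3 : p ∣ r * p - (r * p - k) := Nat.dvd_sub h2 h1
  have h4 : r * p - (r * p - k) = k := by omega
  rw [h4] at h3
  exact absurd (Nat.le_of_dvd hk1 h3) (by omega)

lemma part2 (p m n : ℕ) [Fact p.Prime] (hm : 0 < m) (hn : 0 < n) (hpm : ¬ p ∣ m) :
    (m : ZMod p) * ∑ r ∈ Finset.Icc 1 n, Kp p m (r : ℤ)
      = - ∑ k ∈ (Finset.Icc 1 (p * n / m)).filter (fun k => ¬ p ∣ k),
            ((k : ZMod p))⁻¹ := by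
  classical
  have hp2 := (Fact.out : p.Prime).two_le
  have hp0 : 0 < p := by omega
  have hmne : (m : ZMod p) ≠ 0 := by
    simpa [ZMod.natCast_eq_zero_iff] using hpm
  rw [Finset.mul_sum]
  simp only [Kp, Finset.mul_sum]
  rw [← Finset.sum_neg_distrib, Finset.sum_sigma']
  refine Finset.sum_nbij' (fun x => (x.1 * p - x.2) / m)
    (fun t => ⟨t * m / p + 1, (t * m / p + 1) * p - t * m⟩) ?_ ?_ ?_ ?_ ?_
  · rintro ⟨r, k⟩ hx
    simp only [Finset.mem_sigma, Finset.mem_Icc, Finset.mem_filter, Finset.mem_Ioo] at hx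
    obtain ⟨⟨hr1, hr2⟩, ⟨hk1, hk2⟩, hdZ⟩ := hx
    obtain ⟨hkle, hdvdN, hjm, hpj⟩ := fwd_facts p m r k hp0 hm hr1 hk1 hk2 hdZ
    have hprp : p ≤ r * p := Nat.le_mul_of_pos_left p hr1
    simp only [Finset.mem_filter, Finset.mem_Icc]
    refine ⟨⟨Nat.div_pos (Nat.le_of_dvd (by omega) hdvdN) hm, ?_⟩, hpj⟩
    · rw [Nat.le_div_iff_mul_le hm, hjm]
      have h1 : r * p ≤ n * p := Nat.mul_le_mul_right p hr2
      have h2 : n * p = p * n := mul_comm n p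
      omega
  · intro t ht
    simp only [Finset.mem_filter, Finset.mem_Icc] at ht
    obtain ⟨⟨ht1, ht2⟩, hpt⟩ := ht
    simp only [Finset.mem_sigma, Finset.mem_Icc, Finset.mem_filter, Finset.mem_Ioo]
    have e1 : p * (t * m / p) + t * m % p = t * m := Nat.div_add_mod _ _
    have hs : t * m % p < p := Nat.mod_lt _ hp0
    have hs0 : t * m % p ≠ 0 := by
      intro h
      have : p ∣ t * m := Nat.dvd_of_mod_eq_zero h
      rcases (Fact.out : p.Prime).dvd_mul.mp this with h' | h'
      exacts [hpt h', hpm h']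
    have e2 : (t * m / p + 1) * p = p * (t * m / p) + p := by ring
    have htm : t * m ≤ p * n := by
      have h0 := Nat.div_mul_le_self (p * n) m
      have h1 : t * m ≤ p * n / m * m := Nat.mul_le_mul_right m ht2
      omega
    have htmlt : t * m < n * p := by
      have hne : t * m ≠ p * n := by
        intro h
        have : p ∣ t * m := h ▸ dvd_mul_right p n
        rcases (Fact.out : p.Prime).dvd_mul.mp this with h' | h'
        exacts [hpt h', hpm h']
      have h2 : n * p = p * n := mul_comm n p
      omega
    refine ⟨⟨Nat.succ_le_succ (Nat.zero_le _), ?_⟩, ⟨by omega, by omega⟩, ?_⟩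
    · have : t * m / p < n := (Nat.div_lt_iff_lt_mul hp0).mpr htmlt
      omega
    · have hle : t * m ≤ (t * m / p + 1) * p := by omega
      have hk : (((t * m / p + 1) * p - t * m : ℕ) : ℤ)
          = ((t * m / p + 1 : ℕ) : ℤ) * p - (t : ℤ) * m := by
        push_cast [Nat.cast_sub hle]; ring
      rw [hk]
      have h3 : ((t * m / p + 1 : ℕ) : ℤ) * p - (t : ℤ) * m - ((t * m / p + 1 : ℕ) : ℤ) * p
          = -((t : ℤ) * m) := by ring
      rw [h3]
      exact (dvd_mul_left (m : ℤ) (t : ℤ)).neg_right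
  · rintro ⟨r, k⟩ hx
    simp only [Finset.mem_sigma, Finset.mem_Icc, Finset.mem_filter, Finset.mem_Ioo] at hx
    obtain ⟨⟨hr1, hr2⟩, ⟨hk1, hk2⟩, hdZ⟩ := hx
    obtain ⟨hkle, hdvdN, hjm, hpj⟩ := fwd_facts p m r k hp0 hm hr1 hk1 hk2 hdZ
    obtain ⟨r', rfl⟩ : ∃ r', r = r' + 1 := ⟨r - 1, by omega⟩
    have e3 : (r' + 1) * p = r' * p + p := by ring
    have hrw : (r' + 1) * p - k = p - k + r' * p := by omega
    have hD : ((r' + 1) * p - k) / p = r' := by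
      rw [hrw, Nat.add_mul_div_right _ _ hp0, Nat.div_eq_of_lt (by omega), zero_add]
    have hsec : (((r' + 1) * p - k) / p + 1) * p - ((r' + 1) * p - k) = k := by
      rw [hD]; omega
    dsimp only
    rw [hjm, hsec, hD]
  · intro t ht
    simp only [Finset.mem_filter, Finset.mem_Icc] at ht
    obtain ⟨⟨ht1, ht2⟩, hpt⟩ := ht
    have e1 : p * (t * m / p) + t * m % p = t * m := Nat.div_add_mod _ _
    have hs : t * m % p < p := Nat.mod_lt _ hp0
    have e2 : (t * m / p + 1) * p = p * (t * m / p) + p := by ring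
    dsimp only
    have h1 : (t * m / p + 1) * p - ((t * m / p + 1) * p - t * m) = t * m := by omega
    rw [h1, Nat.mul_div_cancel t hm]
  · rintro ⟨r, k⟩ hx
    simp only [Finset.mem_sigma, Finset.mem_Icc, Finset.mem_filter, Finset.mem_Ioo] at hx
    obtain ⟨⟨hr1, hr2⟩, ⟨hk1, hk2⟩, hdZ⟩ := hx
    obtain ⟨hkle, hdvdN, hjm, hpj⟩ := fwd_facts p m r k hp0 hm hr1 hk1 hk2 hdZ
    dsimp only
    set jj := (r * p - k) / m with hjjdef
    have hjne : (jj : ZMod p) ≠ 0 := by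
      simpa [ZMod.natCast_eq_zero_iff] using hpj
    have hkZ : (k : ZMod p) = -((jj : ZMod p) * m) := by
      have hZ : ((k : ℕ) : ℤ) = (r : ℤ) * p - (jj : ℤ) * m := by
        have h5 : ((jj * m : ℕ) : ℤ) = ((r * p - k : ℕ) : ℤ) := by exact_mod_cast hjm
        push_cast [Nat.cast_sub hkle] at h5
        linarith
      calc (k : ZMod p) = (((k : ℕ) : ℤ) : ZMod p) := by push_cast; ring
        _ = (((r : ℤ) * p - (jj : ℤ) * m : ℤ) : ZMod p) := by rw [hZ]
        _ = -((jj : ZMod p) * m) := by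
            push_cast
            rw [ZMod.natCast_self]
            ring
    rw [hkZ, inv_neg, mul_inv, mul_neg, neg_inj, mul_comm ((jj : ZMod p))⁻¹,
      ← mul_assoc, mul_inv_cancel₀ hmne, one_mul]

lemma cast_sum_congr (p : ℕ) [Fact p.Prime] (x y : ℚ) (hx : Aux.PI p x) (hy : Aux.PI p y)
    (hxy : ((x : ℚ) : ZMod p) = ((y : ℚ) : ZMod p)) :
    ((∑ i ∈ Finset.range (p - 1), (bernoulli i * ((p - 1).choose i) : ℚ) * x ^ (p - 1 - i)
        : ℚ) : ZMod p)
      = ((∑ i ∈ Finset.range (p - 1), (bernoulli i * ((p - 1).choose i) : ℚ) * y ^ (p - 1 - i)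
        : ℚ) : ZMod p) := by
  have hc : ∀ i ∈ Finset.range (p - 1), Aux.PI p ((bernoulli i * ((p - 1).choose i) : ℚ)) :=
    fun i hi => (Aux.bern_PI i (Finset.mem_range.mp hi)).mul (Aux.PI.natCast _)
  rw [Aux.cast_sum' (fun i hi => (hc i hi).mul (hx.pow _)),
      Aux.cast_sum' (fun i hi => (hc i hi).mul (hy.pow _))]
  refine Finset.sum_congr rfl fun i hi => ?_
  rw [Aux.cast_mul' (hc i hi) (hx.pow _), Aux.cast_mul' (hc i hi) (hy.pow _),
      Aux.cast_pow' hx, Aux.cast_pow' hy, hxy]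

lemma final_sum (p N : ℕ) [Fact p.Prime] (hp3 : 3 ≤ p) :
    ∑ j ∈ Finset.Icc 1 N, ((j : ZMod p)) ^ (p - 2)
      = ∑ j ∈ (Finset.Icc 1 N).filter (fun j => ¬ p ∣ j), ((j : ZMod p))⁻¹ := by
  have h1 : ∑ j ∈ (Finset.Icc 1 N).filter (fun j => ¬ p ∣ j), ((j : ZMod p)) ^ (p - 2)
      = ∑ j ∈ Finset.Icc 1 N, ((j : ZMod p)) ^ (p - 2) := by
    refine Finset.sum_filter_of_ne fun j hj hne => ?_
    intro hd
    exact hne (by rw [(ZMod.natCast_eq_zero_iff j p).mpr hd, zero_pow (by omega)])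
  rw [← h1]
  refine Finset.sum_congr rfl fun j hj => ?_
  rw [Finset.mem_filter] at hj
  have hj0 : (j : ZMod p) ≠ 0 := by
    simpa [ZMod.natCast_eq_zero_iff] using hj.2
  have hF : (j : ZMod p) ^ (p - 1) = 1 := ZMod.pow_card_sub_one_eq_one hj0
  have h2 : (j : ZMod p) ^ (p - 2) * j = 1 := by
    rw [← pow_succ]
    convert hF using 2
    omega
  exact eq_inv_of_mul_eq_one_left h2

theorem stmt_1 (p m n : ℕ) [Fact p.Prime] (hodd : Odd p) (hm : 0 < m)
    (hn : 0 < n) (hpm : ¬ p ∣ m) :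
    ((((Polynomial.bernoulli (p - 1)).eval (Int.fract ((p * n : ℚ) / m))
        - bernoulli (p - 1) : ℚ)) : ZMod p)
      = (m : ZMod p) * ∑ r ∈ Finset.Icc 1 n, Kp p m (r : ℤ)
    ∧ (m : ZMod p) * ∑ r ∈ Finset.Icc 1 n, Kp p m (r : ℤ)
      = - ∑ k ∈ (Finset.Icc 1 (p * n / m)).filter (fun k => ¬ p ∣ k),
            ((k : ZMod p))⁻¹ := by
  classical
  have hp2 := (Fact.out : p.Prime).two_le
  have hp3 : 3 ≤ p := by
    have := Nat.odd_iff.mp hodd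
    omega
  have hmne : (m : ZMod p) ≠ 0 := by
    simpa [ZMod.natCast_eq_zero_iff] using hpm
  set a := p * n % m with hadef
  set N := p * n / m with hNdef
  have hdm : m * N + a = p * n := Nat.div_add_mod _ _
  have ham : a < m := Nat.mod_lt _ hm
  have hmq : ((m : ℚ)) ≠ 0 := by positivity
  have hfr : Int.fract ((p * n : ℚ) / m) = (a : ℚ) / m := by
    have h1 : ((p * n : ℚ)) / m = (a : ℚ) / m + (N : ℕ) := by
      field_simp
      have h2 := congrArg (Nat.cast : ℕ → ℚ) hdm
      push_cast at h2
      linarith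
    rw [h1, Int.fract_add_natCast, Int.fract_eq_self.mpr
      ⟨by positivity, by rw [div_lt_one (by positivity)]; exact_mod_cast ham⟩]
  have hpart2 := part2 p m n hm hn hpm
  have hxPI : Aux.PI p ((a : ℚ) / (m : ℚ)) := (Aux.PI.natCast a).divNat hpm
  have hyPI : Aux.PI p (-(N : ℚ)) := (Aux.PI.natCast N).neg
  have hxy : (((a : ℚ) / (m : ℚ) : ℚ) : ZMod p) = ((-(N : ℚ) : ℚ) : ZMod p) := by
    rw [Rat.cast_div_of_ne_zero (by simp) (by simpa [ZMod.natCast_eq_zero_iff] using hpm),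
      Rat.cast_neg, Rat.cast_natCast, Rat.cast_natCast, Rat.cast_natCast]
    have h0 : (m : ZMod p) * N + a = 0 := by
      have h2 := congrArg (Nat.cast : ℕ → ZMod p) hdm
      push_cast at h2
      rw [ZMod.natCast_self, zero_mul] at h2
      simpa using h2
    field_simp
    linear_combination h0
  have hodd2 : Odd (p - 2) := Nat.odd_iff.mpr (by have := Nat.odd_iff.mp hodd; omega)
  have key : ((((Polynomial.bernoulli (p - 1)).eval (Int.fract ((p * n : ℚ) / m))
        - bernoulli (p - 1) : ℚ)) : ZMod p)
      = - ∑ k ∈ (Finset.Icc 1 N).filter (fun k => ¬ p ∣ k), ((k : ZMod p))⁻¹ := by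
    rw [hfr, eval_sub_eq]
    rw [cast_sum_congr p ((a : ℚ) / m) (-(N : ℚ)) hxPI hyPI hxy]
    have hq : (∑ i ∈ Finset.range (p - 1),
          (bernoulli i * ((p - 1).choose i) : ℚ) * (-(N : ℚ)) ^ (p - 1 - i) : ℚ)
        = (((p - 1) * ∑ j ∈ Finset.Icc 1 N, j ^ (p - 2) : ℕ) : ℚ) := by
      rw [← eval_sub_eq, eval_neg_nat, Polynomial.bernoulli_eval_zero]
      have hs : ∑ j ∈ Finset.Icc 1 N, (-(j : ℚ)) ^ (p - 1 - 1)
          = -∑ j ∈ Finset.Icc 1 N, (j : ℚ) ^ (p - 2) := by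
        rw [← Finset.sum_neg_distrib]
        refine Finset.sum_congr rfl fun j hj => ?_
        have : p - 1 - 1 = p - 2 := by omega
        rw [this, Odd.neg_pow hodd2]
      rw [hs]
      push_cast
      ring
    rw [hq, Rat.cast_natCast]
    push_cast
    rw [final_sum p N hp3]
    have hpm1 : ((p - 1 : ℕ) : ZMod p) = -1 := by
      rw [Nat.cast_sub (by omega : 1 ≤ p), ZMod.natCast_self]
      ring
    rw [hpm1]
    ring
  exact ⟨key.trans hpart2.symm, hpart2⟩
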